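/- Let P > 0 be fixed, ε > 1, B(N) = ⌈N^ε⌉, and G_N = (1/N)∑_{r=0}^{N-1}|H_r|² with H_r i.i.d. standard complex Gaussian. Then B(N)·E[log(1 + P·N·G_N/B(N))] = Θ(N). -/

import Mathlib

open Filter MeasureTheory ProbabilityTheory
open scoped NNReal ENNReal

noncomputable def expOneMeasure : Measure ℝ :=
  volume.withDensity fun x => ENNReal.ofReal (if 0 ≤ x then Real.exp (-x) else 0)

lemma log_one_add_ge {x : ℝ} (hx : 0 ≤ x) : x - x ^ 2 ≤ Real.log (1 + x) := by
  have h1 : (0:ℝ) < 1 + x := by linarith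
  have h2 : Real.log (1 + x)⁻¹ ≤ (1 + x)⁻¹ - 1 :=
    Real.log_le_sub_one_of_pos (by positivity)
  rw [Real.log_inv] at h2
  have hinv : (1 + x) * (1 + x)⁻¹ = 1 := mul_inv_cancel₀ h1.ne'
  nlinarith [h2, sq_nonneg x, mul_pos h1 h1, inv_nonneg.mpr h1.le]

lemma expOne_aux (n : ℕ) :
    Integrable (fun x : ℝ => x ^ n) expOneMeasure ∧
      ∫ x, x ^ n ∂expOneMeasure = (n.factorial : ℝ) := by
  set g : ℝ → ℝ≥0 := fun x => Real.toNNReal (if 0 ≤ x then Real.exp (-x) else 0) with hg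
  have hgm : Measurable g := by
    apply Measurable.real_toNNReal
    exact Measurable.ite measurableSet_Ici (Real.measurable_exp.comp measurable_neg)
      measurable_const
  have hexp : expOneMeasure = volume.withDensity fun x => ((g x : ℝ≥0) : ℝ≥0∞) := rfl
  have hsmul : (fun x : ℝ => g x • x ^ n) =
      Set.indicator (Set.Ici (0:ℝ)) (fun x => Real.exp (-x) * x ^ n) := by
    funext x
    by_cases h : 0 ≤ x
    · simp [hg, h, Set.indicator_of_mem (Set.mem_Ici.mpr h), NNReal.smul_def,
        Real.coe_toNNReal _ (Real.exp_nonneg _)]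
    · simp [hg, h, Set.indicator_of_notMem (fun hc => h (Set.mem_Ici.mp hc))]
  have hIoi : IntegrableOn (fun x => Real.exp (-x) * x ^ n) (Set.Ioi (0:ℝ)) := by
    have := Real.GammaIntegral_convergent (s := (n:ℝ) + 1) (by positivity)
    have heq : (fun x : ℝ => Real.exp (-x) * x ^ ((n:ℝ) + 1 - 1)) =
        fun x => Real.exp (-x) * x ^ n := by
      funext x; rw [add_sub_cancel_right, Real.rpow_natCast]
    rwa [heq] at this
  have hind : Integrable (Set.indicator (Set.Ici (0:ℝ)) (fun x => Real.exp (-x) * x ^ n))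
      volume := by
    rw [integrable_indicator_iff measurableSet_Ici]
    rwa [integrableOn_Ici_iff_integrableOn_Ioi]
  constructor
  · rw [hexp, integrable_withDensity_iff_integrable_smul hgm, hsmul]
    exact hind
  · rw [hexp, integral_withDensity_eq_integral_smul hgm]
    rw [hsmul, integral_indicator measurableSet_Ici, integral_Ici_eq_integral_Ioi]
    have hΓ : Real.Gamma ((n:ℝ) + 1) = ∫ x in Set.Ioi (0:ℝ), Real.exp (-x) * x ^ ((n:ℝ)+1-1) :=
      Real.Gamma_eq_integral (by positivity)
    have heq : (fun x : ℝ => Real.exp (-x) * x ^ ((n:ℝ) + 1 - 1)) =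
        fun x => Real.exp (-x) * x ^ n := by
      funext x; rw [add_sub_cancel_right, Real.rpow_natCast]
    rw [heq] at hΓ
    rw [← hΓ, Real.Gamma_nat_eq_factorial]

theorem stmt_4 {Ω : Type*} [MeasureSpace Ω] [IsProbabilityMeasure (ℙ : Measure Ω)]
    (H : ℕ → Ω → ℂ)
    (hmeas : ∀ r, Measurable (H r))
    (hindep : iIndepFun (fun r ω => ‖H r ω‖ ^ 2) ℙ)
    (hdist : ∀ r, Measure.map (fun ω => ‖H r ω‖ ^ 2) ℙ = expOneMeasure)
    (P : ℝ) (hP : 0 < P) (ε : ℝ) (hε : 1 < ε)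
    (B : ℕ → ℕ) (hB : ∀ N, B N = ⌈(N : ℝ) ^ ε⌉₊)
    (G : ℕ → Ω → ℝ)
    (hG : ∀ N ω, G N ω = (∑ r ∈ Finset.range N, ‖H r ω‖ ^ 2) / N) :
    ∃ c₁ c₂ : ℝ, 0 < c₁ ∧ 0 < c₂ ∧ ∃ N₀ : ℕ, ∀ N > N₀,
      c₁ ≤ ((B N : ℝ) * ∫ ω, Real.log (1 + P * N * G N ω / (B N : ℝ)) ∂(ℙ : Measure Ω))
            / (N : ℝ) ∧
      ((B N : ℝ) * ∫ ω, Real.log (1 + P * N * G N ω / (B N : ℝ)) ∂(ℙ : Measure Ω))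
            / (N : ℝ) ≤ c₂ := by
  set X : ℕ → Ω → ℝ := fun r ω => ‖H r ω‖ ^ 2 with hX
  have hXmeas : ∀ r, Measurable (X r) := fun r =>
    ((continuous_norm.measurable.comp (hmeas r)).pow_const 2)
  have hX0 : ∀ r ω, 0 ≤ X r ω := fun r ω => sq_nonneg _
  -- moments of X r
  have hmom : ∀ r k, Integrable (fun ω => X r ω ^ k) ℙ ∧
      ∫ ω, X r ω ^ k ∂ℙ = (k.factorial : ℝ) := by
    intro r k
    have hsm : AEStronglyMeasurable (fun x : ℝ => x ^ k)
        (Measure.map (X r) ℙ) := (measurable_id.pow_const k).aestronglyMeasurable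
    constructor
    · have := (expOne_aux k).1
      rw [← hdist r] at this
      exact (integrable_map_measure hsm (hXmeas r).aemeasurable).mp this
    · have := (expOne_aux k).2
      rw [← hdist r, integral_map (hXmeas r).aemeasurable hsm] at this
      exact this
  have hXint : ∀ r, Integrable (X r) ℙ := by
    intro r; have := (hmom r 1).1; simpa using this
  have hXmean : ∀ r, ∫ ω, X r ω ∂ℙ = 1 := by
    intro r; have := (hmom r 1).2; simpa using this
  -- products
  have hprod : ∀ i j, Integrable (fun ω => X i ω * X j ω) ℙ ∧
      ∫ ω, X i ω * X j ω ∂ℙ ≤ 2 := by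
    intro i j
    rcases eq_or_ne i j with rfl | hij
    · have h2 := hmom i 2
      constructor
      · have := h2.1; simpa [sq] using this
      · have := h2.2; simp [Nat.factorial] at this
        calc ∫ ω, X i ω * X i ω ∂ℙ = ∫ ω, X i ω ^ 2 ∂ℙ := by simp [sq]
          _ ≤ 2 := by rw [this]
    · have hid : IndepFun (X i) (X j) ℙ := hindep.indepFun hij
      refine ⟨hid.integrable_mul (hXint i) (hXint j), ?_⟩
      have h := hid.integral_mul_eq_mul_integral (hXint i).aestronglyMeasurable (hXint j).aestronglyMeasurable
      have h2 : ∫ ω, X i ω * X j ω ∂ℙ = (∫ ω, X i ω ∂ℙ) * ∫ ω, X j ω ∂ℙ := by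
        simpa [Pi.mul_apply] using h
      rw [h2, hXmean, hXmean]
      norm_num
  -- partial sums
  set S : ℕ → Ω → ℝ := fun N ω => ∑ r ∈ Finset.range N, X r ω with hS
  have hSmeas : ∀ N, Measurable (S N) := fun N =>
    Finset.measurable_sum _ fun r _ => hXmeas r
  have hSint : ∀ N, Integrable (S N) ℙ := fun N =>
    integrable_finset_sum _ fun r _ => hXint r
  have hSmean : ∀ N, ∫ ω, S N ω ∂ℙ = N := by
    intro N
    rw [integral_finset_sum _ fun r _ => hXint r]
    simp [hXmean]
  have hS0 : ∀ N ω, 0 ≤ S N ω := fun N ω =>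
    Finset.sum_nonneg fun r _ => hX0 r ω
  have hSsq : ∀ N ω, S N ω ^ 2 =
      ∑ i ∈ Finset.range N, ∑ j ∈ Finset.range N, X i ω * X j ω := by
    intro N ω; rw [sq, Finset.sum_mul_sum]
  have hS2int : ∀ N, Integrable (fun ω => S N ω ^ 2) ℙ := by
    intro N
    have : Integrable (fun ω => ∑ i ∈ Finset.range N, ∑ j ∈ Finset.range N,
        X i ω * X j ω) ℙ :=
      integrable_finset_sum _ fun i _ => integrable_finset_sum _ fun j _ => (hprod i j).1
    exact this.congr (by filter_upwards with ω using (hSsq N ω).symm)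
  have hS2le : ∀ N, ∫ ω, S N ω ^ 2 ∂ℙ ≤ 2 * (N:ℝ) ^ 2 := by
    intro N
    have h1 : ∫ ω, S N ω ^ 2 ∂ℙ = ∑ i ∈ Finset.range N, ∑ j ∈ Finset.range N,
        ∫ ω, X i ω * X j ω ∂ℙ := by
      rw [integral_congr_ae (by filter_upwards with ω using hSsq N ω)]
      rw [integral_finset_sum _ fun i _ => integrable_finset_sum _ fun j _ => (hprod i j).1]
      exact Finset.sum_congr rfl fun i _ =>
        integral_finset_sum _ fun j _ => (hprod i j).1
    rw [h1]
    calc (∑ i ∈ Finset.range N, ∑ j ∈ Finset.range N, ∫ ω, X i ω * X j ω ∂ℙ)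
        ≤ ∑ i ∈ Finset.range N, ∑ j ∈ Finset.range N, (2:ℝ) :=
          Finset.sum_le_sum fun i _ => Finset.sum_le_sum fun j _ => (hprod i j).2
      _ = 2 * (N:ℝ)^2 := by simp [Finset.sum_const]; ring
  -- choose N₀
  have htend : Tendsto (fun N : ℕ => (N:ℝ) ^ (1 - ε)) atTop (nhds 0) := by
    have h1 : Tendsto (fun x : ℝ => x ^ (1 - ε)) atTop (nhds 0) := by
      have := tendsto_rpow_neg_atTop (y := ε - 1) (by linarith)
      simpa [neg_sub] using this
    exact h1.comp tendsto_natCast_atTop_atTop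
  have hev : ∀ᶠ N : ℕ in atTop, (N:ℝ) ^ (1 - ε) ≤ 1 / (4 * P) := by
    have : (0:ℝ) < 1 / (4 * P) := by positivity
    filter_upwards [htend.eventually (eventually_le_nhds this)] with N h using h
  obtain ⟨N₁, hN₁⟩ := eventually_atTop.mp hev
  refine ⟨P / 2, P, by positivity, hP, max N₁ 1, fun N hN => ?_⟩
  have hN1 : 1 ≤ N := le_trans (le_max_right _ _) hN.le
  have hNpos : (0:ℝ) < N := by exact_mod_cast Nat.lt_of_lt_of_le Nat.zero_lt_one hN1
  have hNε : (N:ℝ) ^ ε ≤ (B N : ℝ) := by rw [hB]; exact Nat.le_ceil _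
  have hbpos : (0:ℝ) < (B N : ℝ) :=
    lt_of_lt_of_le (Real.rpow_pos_of_pos hNpos ε) hNε
  set b : ℝ := (B N : ℝ) with hb
  set c : ℝ := P / b with hc
  have hcpos : 0 < c := div_pos hP hbpos
  -- integrand equals log(1 + c * S N ω)
  have hintegrand : ∀ ω, Real.log (1 + P * N * G N ω / b) = Real.log (1 + c * S N ω) := by
    intro ω
    congr 1
    rw [hG, hc]
    field_simp [hS, hX]
    ring
  -- integrability of the log term
  have hlog_nonneg : ∀ ω, 0 ≤ Real.log (1 + c * S N ω) := fun ω =>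
    Real.log_nonneg (by nlinarith [hS0 N ω, hcpos])
  have hlog_le : ∀ ω, Real.log (1 + c * S N ω) ≤ c * S N ω := by
    intro ω
    have := Real.log_le_sub_one_of_pos
      (show (0:ℝ) < 1 + c * S N ω by nlinarith [hS0 N ω, hcpos.le])
    linarith
  have hlog_ge : ∀ ω, c * S N ω - (c * S N ω) ^ 2 ≤ Real.log (1 + c * S N ω) := fun ω =>
    log_one_add_ge (mul_nonneg hcpos.le (hS0 N ω))
  have hlogint : Integrable (fun ω => Real.log (1 + c * S N ω)) ℙ := by
    refine Integrable.mono' ((hSint N).const_mul c) ?_ ?_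
    · exact (Real.measurable_log.comp
        (measurable_const.add ((hSmeas N).const_mul c))).aestronglyMeasurable
    · filter_upwards with ω
      rw [Real.norm_of_nonneg (hlog_nonneg ω)]
      exact hlog_le ω
  have hIeq : ∫ ω, Real.log (1 + P * N * G N ω / b) ∂ℙ
      = ∫ ω, Real.log (1 + c * S N ω) ∂ℙ :=
    integral_congr_ae (by filter_upwards with ω using hintegrand ω)
  set I : ℝ := ∫ ω, Real.log (1 + c * S N ω) ∂ℙ with hI
  -- upper bound
  have hIub : I ≤ c * N := by
    have := integral_mono hlogint ((hSint N).const_mul c) hlog_le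
    rwa [integral_const_mul, hSmean] at this
  -- lower bound
  have hIlb : c * N - c ^ 2 * (2 * (N:ℝ) ^ 2) ≤ I := by
    have hsub : Integrable (fun ω => c * S N ω - c ^ 2 * S N ω ^ 2) ℙ :=
      ((hSint N).const_mul c).sub ((hS2int N).const_mul (c ^ 2))
    have hmono := integral_mono hsub hlogint (fun ω => by
      have := hlog_ge ω; nlinarith [this])
    rw [integral_sub ((hSint N).const_mul c) ((hS2int N).const_mul (c ^ 2)),
      integral_const_mul, integral_const_mul, hSmean] at hmono
    have h2 : c ^ 2 * ∫ ω, S N ω ^ 2 ∂ℙ ≤ c ^ 2 * (2 * (N:ℝ) ^ 2) :=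
      mul_le_mul_of_nonneg_left (hS2le N) (sq_nonneg c)
    linarith
  -- arithmetic conclusion
  have hbc : b * c = P := by rw [hc]; field_simp
  have hQub : b * I ≤ P * N := by
    calc b * I ≤ b * (c * N) := mul_le_mul_of_nonneg_left hIub hbpos.le
      _ = P * N := by rw [← mul_assoc, hbc]
  have ht : 2 * P ^ 2 * (N:ℝ) / b ≤ P / 2 := by
    have h1 : 2 * P ^ 2 * (N:ℝ) / b ≤ 2 * P ^ 2 * (N:ℝ) / (N:ℝ) ^ ε :=
      div_le_div_of_nonneg_left (by positivity) (Real.rpow_pos_of_pos hNpos ε) hNε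
    have h2 : 2 * P ^ 2 * (N:ℝ) / (N:ℝ) ^ ε = 2 * P ^ 2 * (N:ℝ) ^ (1 - ε) := by
      rw [Real.rpow_sub hNpos, Real.rpow_one]; ring
    have h3 : (N:ℝ) ^ (1 - ε) ≤ 1 / (4 * P) :=
      hN₁ N (le_trans (le_max_left _ _) hN.le)
    calc 2 * P ^ 2 * (N:ℝ) / b ≤ 2 * P ^ 2 * (N:ℝ) ^ (1 - ε) := by rw [← h2]; exact h1
      _ ≤ 2 * P ^ 2 * (1 / (4 * P)) := mul_le_mul_of_nonneg_left h3 (by positivity)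
      _ = P / 2 := by field_simp; ring
  have hQlb : P / 2 * N ≤ b * I := by
    have h1 : b * (c * N - c ^ 2 * (2 * (N:ℝ) ^ 2)) ≤ b * I :=
      mul_le_mul_of_nonneg_left hIlb hbpos.le
    have h2 : b * (c * N - c ^ 2 * (2 * (N:ℝ) ^ 2))
        = P * N - (2 * P ^ 2 * (N:ℝ) / b) * N := by
      rw [hc]; field_simp
    nlinarith [ht, hNpos]
  rw [hIeq]
  constructor
  · rw [le_div_iff₀ hNpos]; exact hQlb
  · rw [div_le_iff₀ hNpos]; exact hQub
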